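/- Let d be a positive integer and a, b natural numbers. Call F ∈ ℂ⟦x,y⟧ invariant if F_{i,j} = 0 whenever d does not divide a·i + b·j. Let f, g ∈ ℂ⟦x,y⟧ be invariant, and suppose f is y-general of order k, i.e., f_{0,j} = 0 for all j < k and f_{0,k} ≠ 0. If Q, R ∈ ℂ⟦x,y⟧ satisfy g = Q·f + R, where R_{i,j} = 0 for all j ≥ k (i.e., R is a polynomial in y of degree < k), then Q and R are also invariant: Q_{i,j} = 0 and R_{i,j} = 0 whenever d ∤ (a·i + b·j). In other words, Weierstrass division can be performed inside the invariant ring ℂ⟦x,y⟧^{G_d}. -/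

import Mathlib

open MvPowerSeries Finsupp Finset

lemma fin2_eq (m : Fin 2 →₀ ℕ) :
    m = Finsupp.single (0 : Fin 2) (m 0) + Finsupp.single 1 (m 1) := by
  ext x
  fin_cases x <;> simp

lemma coeff_mul_fin2 (φ ψ : MvPowerSeries (Fin 2) ℂ) (i j : ℕ) :
    MvPowerSeries.coeff (Finsupp.single (0 : Fin 2) i + Finsupp.single 1 j) (φ * ψ) =
      ∑ p ∈ antidiagonal i, ∑ q ∈ antidiagonal j,
        MvPowerSeries.coeff (Finsupp.single (0 : Fin 2) p.1 + Finsupp.single 1 q.1) φ *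
        MvPowerSeries.coeff (Finsupp.single (0 : Fin 2) p.2 + Finsupp.single 1 q.2) ψ := by
  rw [MvPowerSeries.coeff_mul, ← Finset.sum_product']
  refine Finset.sum_nbij' (fun p => ((p.1 0, p.2 0), (p.1 1, p.2 1)))
    (fun pq => (Finsupp.single (0 : Fin 2) pq.1.1 + Finsupp.single 1 pq.2.1,
      Finsupp.single (0 : Fin 2) pq.1.2 + Finsupp.single 1 pq.2.2)) ?_ ?_ ?_ ?_ ?_
  · intro p hp
    rw [Finset.HasAntidiagonal.mem_antidiagonal] at hp
    simp only [Finset.mem_product, Finset.HasAntidiagonal.mem_antidiagonal]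
    constructor
    · have := congrArg (fun m => m 0) hp; simpa using this
    · have := congrArg (fun m => m 1) hp; simpa using this
  · intro pq hpq
    simp only [Finset.mem_product, Finset.HasAntidiagonal.mem_antidiagonal] at hpq
    rw [Finset.HasAntidiagonal.mem_antidiagonal]
    ext x
    fin_cases x <;> simp [hpq.1, hpq.2]
  · intro p hp
    ext1 <;> exact (fin2_eq _).symm
  · intro pq hpq
    simp
  · intro p hp
    rw [fin2_eq p.1, fin2_eq p.2]
    simp

theorem weierstrass_division_invariant (d : ℕ) (hd : 0 < d) (a b : ℕ)
    (f g Q R : MvPowerSeries (Fin 2) ℂ) (k : ℕ)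
    (hfinv : ∀ i j : ℕ, ¬ d ∣ (a * i + b * j) →
      MvPowerSeries.coeff (Finsupp.single (0 : Fin 2) i + Finsupp.single 1 j) f = 0)
    (hginv : ∀ i j : ℕ, ¬ d ∣ (a * i + b * j) →
      MvPowerSeries.coeff (Finsupp.single (0 : Fin 2) i + Finsupp.single 1 j) g = 0)
    (hfgen₁ : ∀ j < k, MvPowerSeries.coeff (Finsupp.single (1 : Fin 2) j) f = 0)
    (hfgen₂ : MvPowerSeries.coeff (Finsupp.single (1 : Fin 2) k) f ≠ 0)
    (hdiv : g = Q * f + R)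
    (hR : ∀ i j : ℕ, k ≤ j →
      MvPowerSeries.coeff (Finsupp.single (0 : Fin 2) i + Finsupp.single 1 j) R = 0) :
    (∀ i j : ℕ, ¬ d ∣ (a * i + b * j) →
      MvPowerSeries.coeff (Finsupp.single (0 : Fin 2) i + Finsupp.single 1 j) Q = 0) ∧
    (∀ i j : ℕ, ¬ d ∣ (a * i + b * j) →
      MvPowerSeries.coeff (Finsupp.single (0 : Fin 2) i + Finsupp.single 1 j) R = 0) := by
  classical
  -- the "bad" (non-invariant) part of Q, as a power series
  set Qb : MvPowerSeries (Fin 2) ℂ :=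
    fun m => if d ∣ (a * m 0 + b * m 1) then 0 else MvPowerSeries.coeff m Q with hQb
  have hQbc : ∀ i j : ℕ,
      MvPowerSeries.coeff (Finsupp.single (0 : Fin 2) i + Finsupp.single 1 j) Qb =
        if d ∣ (a * i + b * j) then 0
        else MvPowerSeries.coeff (Finsupp.single (0 : Fin 2) i + Finsupp.single 1 j) Q := by
    intro i j
    have h0 : MvPowerSeries.coeff (Finsupp.single (0 : Fin 2) i + Finsupp.single 1 j) Qb =
        Qb (Finsupp.single (0 : Fin 2) i + Finsupp.single 1 j) := rfl
    rw [h0, hQb]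
    simp
  -- weight additivity on antidiagonals
  have hw : ∀ i j : ℕ, ∀ p ∈ antidiagonal i, ∀ q ∈ antidiagonal j,
      a * i + b * j = (a * p.1 + b * q.1) + (a * p.2 + b * q.2) := by
    intro i j p hp q hq
    rw [Finset.HasAntidiagonal.mem_antidiagonal] at hp hq
    rw [← hp, ← hq]; ring
  -- the good part of Q times f has no bad coefficients
  have hgood : ∀ i j : ℕ, ¬ d ∣ (a * i + b * j) →
      MvPowerSeries.coeff (Finsupp.single (0 : Fin 2) i + Finsupp.single 1 j)
        ((Q - Qb) * f) = 0 := by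
    intro i j hij
    rw [coeff_mul_fin2]
    refine Finset.sum_eq_zero fun p hp => Finset.sum_eq_zero fun q hq => ?_
    by_cases h1 : d ∣ (a * p.1 + b * q.1)
    · have h2 : ¬ d ∣ (a * p.2 + b * q.2) := by
        intro h2; exact hij ((hw i j p hp q hq) ▸ dvd_add h1 h2)
      rw [hfinv _ _ h2, mul_zero]
    · rw [map_sub, hQbc, if_neg h1, sub_self, zero_mul]
  -- the bad part of Q times f has no good coefficients
  have hbadgood : ∀ i j : ℕ, d ∣ (a * i + b * j) →
      MvPowerSeries.coeff (Finsupp.single (0 : Fin 2) i + Finsupp.single 1 j)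
        (Qb * f) = 0 := by
    intro i j hij
    rw [coeff_mul_fin2]
    refine Finset.sum_eq_zero fun p hp => Finset.sum_eq_zero fun q hq => ?_
    by_cases h1 : d ∣ (a * p.1 + b * q.1)
    · rw [hQbc, if_pos h1, zero_mul]
    · have h2 : ¬ d ∣ (a * p.2 + b * q.2) := by
        intro h2
        apply h1
        have hij' : d ∣ (a * p.1 + b * q.1) + (a * p.2 + b * q.2) := by
          rw [← hw i j p hp q hq]; exact hij
        have := Nat.dvd_sub hij' h2
        simpa using this
      rw [hfinv _ _ h2, mul_zero]
  -- key identity: coefficients of Qb * f equal minus the bad part of R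
  have hkey : ∀ i j : ℕ,
      MvPowerSeries.coeff (Finsupp.single (0 : Fin 2) i + Finsupp.single 1 j) (Qb * f) =
        -(if d ∣ (a * i + b * j) then 0
          else MvPowerSeries.coeff (Finsupp.single (0 : Fin 2) i + Finsupp.single 1 j) R) := by
    intro i j
    by_cases hij : d ∣ (a * i + b * j)
    · rw [if_pos hij, hbadgood i j hij, neg_zero]
    · rw [if_neg hij]
      have hsplit : Q * f = (Q - Qb) * f + Qb * f := by ring
      have hg0 := hginv i j hij
      rw [hdiv, hsplit, map_add, map_add, hgood i j hij, zero_add] at hg0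
      linear_combination hg0
  -- uniqueness: Qb = 0, by strong induction on the x-degree of coefficients
  have hQb0 : ∀ i j : ℕ,
      MvPowerSeries.coeff (Finsupp.single (0 : Fin 2) i + Finsupp.single 1 j) Qb = 0 := by
    intro i
    induction i using Nat.strong_induction_on with
    | _ i IH =>
      set u : PowerSeries ℂ := PowerSeries.mk
        (fun j => MvPowerSeries.coeff (Finsupp.single (0 : Fin 2) i + Finsupp.single 1 j) Qb)
        with hu
      set v : PowerSeries ℂ := PowerSeries.mk
        (fun j => MvPowerSeries.coeff (Finsupp.single (1 : Fin 2) j) f) with hv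
      have hcoe0 : ∀ j : ℕ,
          (Finsupp.single (0 : Fin 2) 0 + Finsupp.single 1 j) =
            Finsupp.single (1 : Fin 2) j := by
        intro j; simp
      -- the slice of the product is the product of the slices
      have hslice : ∀ n : ℕ, (PowerSeries.coeff n) (u * v) =
          MvPowerSeries.coeff (Finsupp.single (0 : Fin 2) i + Finsupp.single 1 n)
            (Qb * f) := by
        intro n
        rw [PowerSeries.coeff_mul, coeff_mul_fin2]
        have hout : ∑ p ∈ antidiagonal i, ∑ q ∈ antidiagonal n,
            MvPowerSeries.coeff (Finsupp.single (0 : Fin 2) p.1 + Finsupp.single 1 q.1) Qb *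
            MvPowerSeries.coeff (Finsupp.single (0 : Fin 2) p.2 + Finsupp.single 1 q.2) f =
            ∑ q ∈ antidiagonal n,
            MvPowerSeries.coeff (Finsupp.single (0 : Fin 2) i + Finsupp.single 1 q.1) Qb *
            MvPowerSeries.coeff (Finsupp.single (0 : Fin 2) 0 + Finsupp.single 1 q.2) f := by
          refine Finset.sum_eq_single_of_mem ((i, 0) : ℕ × ℕ) (by simp) ?_
          intro p hp hne
          rw [Finset.HasAntidiagonal.mem_antidiagonal] at hp
          have hlt : p.1 < i := by
            rcases Nat.lt_or_ge p.1 i with h | h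
            · exact h
            · exfalso; apply hne
              have h1 : p.1 = i := by omega
              have h2 : p.2 = 0 := by omega
              exact Prod.ext h1 h2
          exact Finset.sum_eq_zero fun q hq => by rw [IH p.1 hlt, zero_mul]
        rw [hout]
        refine Finset.sum_congr rfl fun q hq => ?_
        rw [hu, hv]
        simp only [PowerSeries.coeff_mk]
        rw [hcoe0 q.2]
      have huv : u * v = 0 := by
        ext1 n
        rw [map_zero]
        by_cases hn : k ≤ n
        · rw [hslice n, hkey i n, hR i n hn]
          simp
        · rw [PowerSeries.coeff_mul]
          refine Finset.sum_eq_zero fun p hp => ?_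
          rw [Finset.HasAntidiagonal.mem_antidiagonal] at hp
          have hp2 : p.2 < k := by omega
          rw [hv]
          simp only [PowerSeries.coeff_mk]
          rw [hfgen₁ p.2 hp2, mul_zero]
      have hvne : v ≠ 0 := by
        intro h
        apply hfgen₂
        have := congrArg (PowerSeries.coeff k) h
        simpa [hv] using this
      have hu0 : u = 0 := by
        rcases mul_eq_zero.mp huv with h | h
        · exact h
        · exact absurd h hvne
      intro j
      have := congrArg (PowerSeries.coeff j) hu0
      simpa [hu] using this
  constructor
  · intro i j hij
    have := hQbc i j
    rw [if_neg hij, hQb0 i j] at this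
    exact this.symm
  · intro i j hij
    have h1 := hkey i j
    rw [if_neg hij] at h1
    have h3 : MvPowerSeries.coeff (Finsupp.single (0 : Fin 2) i + Finsupp.single 1 j)
        (Qb * f) = 0 := by
      rw [coeff_mul_fin2]
      exact Finset.sum_eq_zero fun p hp => Finset.sum_eq_zero fun q hq => by
        rw [hQb0, zero_mul]
    rw [h3] at h1
    exact neg_eq_zero.mp h1.symm
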